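/- Let S, Y, X, Z be random variables with values in finite nonempty types on a common probability space such that X = g(S,Y) for a deterministic function g and Z = f(X) for a deterministic function f, and define ε := I(Z;Y|S) − I(X;Y). If Z is invariant to the nuisance S, i.e. I(Z;S) = 0, then the representation is minimal up to the residual: I(Z;X) = I(X;Y) + ε. -/
import Mathlib


open MeasureTheory ProbabilityTheory
open scoped BigOperators

/-- Shannon entropy (in nats) of a random variable `X` with values in a finite type,
with respect to the measure `μ`. -/
noncomputable def finEntropy {Ω : Type*} [MeasurableSpace Ω] (μ : Measure Ω)
    {α : Type*} [Fintype α] (X : Ω → α) : ℝ :=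
  - ∑ a : α, (μ (X ⁻¹' {a})).toReal * Real.log (μ (X ⁻¹' {a})).toReal

/-- Conditional Shannon entropy `H(X|Z) = H(X,Z) - H(Z)`. -/
noncomputable def finCondEntropy {Ω : Type*} [MeasurableSpace Ω] (μ : Measure Ω)
    {α β : Type*} [Fintype α] [Fintype β] (X : Ω → α) (Z : Ω → β) : ℝ :=
  finEntropy μ (fun ω => (X ω, Z ω)) - finEntropy μ Z

/-- Shannon mutual information `I(X;Y) = H(X) + H(Y) - H(X,Y)`. -/
noncomputable def finMutualInfo {Ω : Type*} [MeasurableSpace Ω] (μ : Measure Ω)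
    {α β : Type*} [Fintype α] [Fintype β] (X : Ω → α) (Y : Ω → β) : ℝ :=
  finEntropy μ X + finEntropy μ Y - finEntropy μ (fun ω => (X ω, Y ω))

/-- Conditional Shannon mutual information
`I(X;Y|S) = H(X,S) + H(Y,S) - H(X,Y,S) - H(S)`. -/
noncomputable def finCondMutualInfo {Ω : Type*} [MeasurableSpace Ω] (μ : Measure Ω)
    {α β γ : Type*} [Fintype α] [Fintype β] [Fintype γ]
    (X : Ω → α) (Y : Ω → β) (S : Ω → γ) : ℝ :=
  finEntropy μ (fun ω => (X ω, S ω)) + finEntropy μ (fun ω => (Y ω, S ω))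
    - finEntropy μ (fun ω => (X ω, Y ω, S ω)) - finEntropy μ S

/-- Entropy of the pair `(k ∘ V, V)` equals the entropy of `V`. -/
lemma finEntropy_pair_comp {Ω : Type*} [MeasurableSpace Ω] (μ : Measure Ω)
    {α β : Type*} [Fintype α] [Fintype β] (V : Ω → α) (k : α → β) :
    finEntropy μ (fun ω => (k (V ω), V ω)) = finEntropy μ V := by
  unfold finEntropy
  rw [Fintype.sum_prod_type, Finset.sum_comm]
  congr 1
  apply Finset.sum_congr rfl
  intro b _
  rw [Finset.sum_eq_single (k b)]
  · have hset : (fun ω => (k (V ω), V ω)) ⁻¹' {(k b, b)} = V ⁻¹' {b} := by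
      ext ω
      simp only [Set.mem_preimage, Set.mem_singleton_iff, Prod.mk.injEq]
      constructor
      · rintro ⟨_, h⟩; exact h
      · intro h; exact ⟨by rw [h], h⟩
    rw [hset]
  · intro a _ ha
    have : (fun ω => (k (V ω), V ω)) ⁻¹' {(a, b)} = ∅ := by
      ext ω
      simp only [Set.mem_preimage, Set.mem_singleton_iff, Prod.mk.injEq,
        Set.mem_empty_iff_false, iff_false]
      rintro ⟨h1, h2⟩
      exact ha (h2 ▸ h1.symm) 
    simp [this]
  · intro h; exact absurd (Finset.mem_univ _) h

theorem invariant_implies_minimal_up_to_residual {Ω : Type*} [MeasurableSpace Ω]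
    (μ : Measure Ω) [IsProbabilityMeasure μ]
    {𝒮 𝒴 𝒳 𝒵 : Type*}
    [Fintype 𝒮] [Nonempty 𝒮] [MeasurableSpace 𝒮] [MeasurableSingletonClass 𝒮]
    [Fintype 𝒴] [Nonempty 𝒴] [MeasurableSpace 𝒴] [MeasurableSingletonClass 𝒴]
    [Fintype 𝒳] [Nonempty 𝒳] [MeasurableSpace 𝒳] [MeasurableSingletonClass 𝒳]
    [Fintype 𝒵] [Nonempty 𝒵] [MeasurableSpace 𝒵] [MeasurableSingletonClass 𝒵]
    (S : Ω → 𝒮) (Y : Ω → 𝒴) (X : Ω → 𝒳) (Z : Ω → 𝒵)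
    (hS : Measurable S) (hY : Measurable Y) (hX : Measurable X) (hZ : Measurable Z)
    (g : 𝒮 × 𝒴 → 𝒳) (hXg : X = fun ω => g (S ω, Y ω))
    (f : 𝒳 → 𝒵) (hZf : Z = f ∘ X)
    (ε : ℝ) (hε : ε = finCondMutualInfo μ Z Y S - finMutualInfo μ X Y)
    (hinv : finMutualInfo μ Z S = 0) :
    finMutualInfo μ Z X = finMutualInfo μ X Y + ε := by
  have h1 : finEntropy μ (fun ω => (Z ω, X ω)) = finEntropy μ X := by
    have := finEntropy_pair_comp μ X f
    simpa [hZf, Function.comp] using this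
  have h2 : finEntropy μ (fun ω => (Z ω, Y ω, S ω))
      = finEntropy μ (fun ω => (Y ω, S ω)) := by
    have := finEntropy_pair_comp μ (fun ω => (Y ω, S ω)) (fun p => f (g (p.2, p.1)))
    simpa [hZf, hXg, Function.comp] using this
  have hinv' : finEntropy μ Z + finEntropy μ S
      - finEntropy μ (fun ω => (Z ω, S ω)) = 0 := hinv
  simp only [finMutualInfo, finCondMutualInfo] at *
  linarith
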